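/- Soundness of the PiCore proof system for event systems: assume ⊥ has no program transitions, every program transition changes the program component, and the program-level proof system is sound (Σ ⊢p P sat [pre,rely,guar,post] implies Σ ⊨p P sat [pre,rely,guar,post]). Then for every event system ES, derivability implies validity: Σ ⊢ ES sat [pre, rely, guar, post] implies Σ ⊨ ES sat [pre, rely, guar, post]. -/

import Mathlib

namespace PiCore

/-- Event systems of the PiCore event specification language. -/
inductive EventSys (Lbl Prog St : Type) : Type where
  | basic (ev : Set (Lbl × Set St × Prog))
  | atom (ev : Set (Lbl × Set St × Prog))
  | trig (P : Prog)
  | seq (S1 S2 : EventSys Lbl Prog St)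
  | choice (S1 S2 : EventSys Lbl Prog St)
  | join (S1 S2 : EventSys Lbl Prog St)
  | iter (b : Set St) (S : EventSys Lbl Prog St)

/-- Transition kinds of event systems: anonymous τ, event entry, atomic event entry. -/
inductive TranKind (Lbl : Type) : Type where
  | tau
  | evt (l : Lbl)
  | aevt (l : Lbl)

variable {Lbl Prog St Env : Type} (K : Type)
variable (ptran : Env → Prog × St → Prog × St → Prop) (bot : Prog)

/-- Labelled small-step semantics of event systems. -/
inductive esStep (Γ : Env) :
    EventSys Lbl Prog St × St → TranKind Lbl × K → EventSys Lbl Prog St × St → Prop where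
  | basicEvt {ev : Set (Lbl × Set St × Prog)} {l g P s κ}
      (h1 : (l, g, P) ∈ ev) (h2 : s ∈ g) :
      esStep Γ (.basic ev, s) (.evt l, κ) (.trig P, s)
  | atomEvt {ev : Set (Lbl × Set St × Prog)} {l g P s t κ}
      (h1 : (l, g, P) ∈ ev) (h2 : s ∈ g)
      (h3 : Relation.ReflTransGen (fun c c' => ptran Γ c c') (P, s) (bot, t)) :
      esStep Γ (.atom ev, s) (.aevt l, κ) (.trig bot, t)
  | trigEvt {P Q s t κ} (h : ptran Γ (P, s) (Q, t)) :
      esStep Γ (.trig P, s) (.tau, κ) (.trig Q, t)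
  | seqStep {S1 S1' S2 s t} {δ : TranKind Lbl × K}
      (h : esStep Γ (S1, s) δ (S1', t)) (hne : S1' ≠ .trig bot) :
      esStep Γ (.seq S1 S2, s) δ (.seq S1' S2, t)
  | seqFin {S1 S2 s t} {δ : TranKind Lbl × K}
      (h : esStep Γ (S1, s) δ (.trig bot, t)) :
      esStep Γ (.seq S1 S2, s) δ (S2, t)
  | choice1 {S1 S2 S1' s t} {δ : TranKind Lbl × K}
      (h : esStep Γ (S1, s) δ (S1', t)) :
      esStep Γ (.choice S1 S2, s) δ (S1', t)
  | choice2 {S1 S2 S2' s t} {δ : TranKind Lbl × K}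
      (h : esStep Γ (S2, s) δ (S2', t)) :
      esStep Γ (.choice S1 S2, s) δ (S2', t)
  | join1 {S1 S2 S1' s t} {δ : TranKind Lbl × K}
      (h : esStep Γ (S1, s) δ (S1', t)) :
      esStep Γ (.join S1 S2, s) δ (.join S1' S2, t)
  | join2 {S1 S2 S2' s t} {δ : TranKind Lbl × K}
      (h : esStep Γ (S2, s) δ (S2', t)) :
      esStep Γ (.join S1 S2, s) δ (.join S1 S2', t)
  | joinFin {s κ} :
      esStep Γ (.join (.trig bot) (.trig bot), s) (.tau, κ) (.trig bot, s)
  | iterT {b S s κ} (h : s ∈ b) (hne : S ≠ .trig bot) :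
      esStep Γ (.iter b S, s) (.tau, κ) (.seq S (.iter b S), s)
  | iterF {b S s κ} (h : s ∉ b) :
      esStep Γ (.iter b S, s) (.tau, κ) (.trig bot, s)

/-- Linear computations of event systems. -/
inductive cpts (Γ : Env) : List (EventSys Lbl Prog St × St) → Prop where
  | one {S s} : cpts Γ [(S, s)]
  | env {S s t cs} (h : cpts Γ ((S, t) :: cs)) : cpts Γ ((S, s) :: (S, t) :: cs)
  | act {S1 S2 s t cs} {δ : TranKind Lbl × K}
      (h1 : esStep K ptran bot Γ (S1, s) δ (S2, t))
      (h2 : cpts Γ ((S2, t) :: cs)) : cpts Γ ((S1, s) :: (S2, t) :: cs)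

/-- Sequential lifting of a computation. -/
def liftSeq (Q : EventSys Lbl Prog St) (c : List (EventSys Lbl Prog St × St)) :
    List (EventSys Lbl Prog St × St) :=
  c.map fun p => (.seq p.1 Q, p.2)

/-- Modular computations of event systems. -/
inductive cptsM (Γ : Env) : List (EventSys Lbl Prog St × St) → Prop where
  | one {S s} : cptsM Γ [(S, s)]
  | env {S s t cs} (h : cptsM Γ ((S, t) :: cs)) : cptsM Γ ((S, s) :: (S, t) :: cs)
  | trigEvt {P Q s t cs} (h : ptran Γ (P, s) (Q, t))
      (h2 : cptsM Γ ((.trig Q, t) :: cs)) :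
      cptsM Γ ((.trig P, s) :: (.trig Q, t) :: cs)
  | basicEvt {ev : Set (Lbl × Set St × Prog)} {l g P s cs}
      (h1 : (l, g, P) ∈ ev) (h2 : s ∈ g)
      (h3 : cptsM Γ ((.trig P, s) :: cs)) :
      cptsM Γ ((.basic ev, s) :: (.trig P, s) :: cs)
  | atomEvt {ev : Set (Lbl × Set St × Prog)} {l g P s t cs}
      (h1 : (l, g, P) ∈ ev) (h2 : s ∈ g)
      (h3 : Relation.ReflTransGen (fun c c' => ptran Γ c c') (P, s) (bot, t))
      (h4 : cptsM Γ ((.trig bot, t) :: cs)) :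
      cptsM Γ ((.atom ev, s) :: (.trig bot, t) :: cs)
  | seqStep {S1 S1' S2 s t cs} {δ : TranKind Lbl × K}
      (h : esStep K ptran bot Γ (S1, s) δ (S1', t)) (hne : S1' ≠ .trig bot)
      (h2 : cptsM Γ ((.seq S1' S2, t) :: cs)) :
      cptsM Γ ((.seq S1 S2, s) :: (.seq S1' S2, t) :: cs)
  | seqFin {S1 S2 s t cs} {δ : TranKind Lbl × K}
      (h : esStep K ptran bot Γ (S1, s) δ (.trig bot, t))
      (h2 : cptsM Γ ((S2, t) :: cs)) :
      cptsM Γ ((.seq S1 S2, s) :: (S2, t) :: cs)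
  | chc1 {S1 S2 S1' s t cs} {δ : TranKind Lbl × K}
      (h : esStep K ptran bot Γ (S1, s) δ (S1', t))
      (h2 : cptsM Γ ((S1', t) :: cs)) :
      cptsM Γ ((.choice S1 S2, s) :: (S1', t) :: cs)
  | chc2 {S1 S2 S2' s t cs} {δ : TranKind Lbl × K}
      (h : esStep K ptran bot Γ (S2, s) δ (S2', t))
      (h2 : cptsM Γ ((S2', t) :: cs)) :
      cptsM Γ ((.choice S1 S2, s) :: (S2', t) :: cs)
  | join1 {S1 S2 S1' s t cs} {δ : TranKind Lbl × K}
      (h : esStep K ptran bot Γ (S1, s) δ (S1', t))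
      (h2 : cptsM Γ ((.join S1' S2, t) :: cs)) :
      cptsM Γ ((.join S1 S2, s) :: (.join S1' S2, t) :: cs)
  | join2 {S1 S2 S2' s t cs} {δ : TranKind Lbl × K}
      (h : esStep K ptran bot Γ (S2, s) δ (S2', t))
      (h2 : cptsM Γ ((.join S1 S2', t) :: cs)) :
      cptsM Γ ((.join S1 S2, s) :: (.join S1 S2', t) :: cs)
  | joinFin {s cs} (h : cptsM Γ ((.trig bot, s) :: cs)) :
      cptsM Γ ((.join (.trig bot) (.trig bot), s) :: (.trig bot, s) :: cs)
  | iterF {b S s cs} (h : s ∉ b) (h2 : cptsM Γ ((.trig bot, s) :: cs)) :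
      cptsM Γ ((.iter b S, s) :: (.trig bot, s) :: cs)
  | iterTOne {b S s cs} (h : s ∈ b) (h2 : cptsM Γ ((S, s) :: cs)) :
      cptsM Γ ((.iter b S, s) :: liftSeq (.iter b S) ((S, s) :: cs))
  | iterTMore {b S s t cs cs'} {δ : TranKind Lbl × K}
      (h : s ∈ b) (h2 : cptsM Γ ((S, s) :: cs))
      (h3 : esStep K ptran bot Γ (((S, s) :: cs).getLast (List.cons_ne_nil _ _)) δ
              (.trig bot, t))
      (h4 : cptsM Γ ((.iter b S, t) :: cs')) :
      cptsM Γ ((.iter b S, s) ::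
        (liftSeq (.iter b S) ((S, s) :: cs) ++ (.iter b S, t) :: cs'))


section RG

variable (Γ : Env)

/-- The assumption function: the initial state is in `pre` and every environment
step (consecutive configurations with identical event systems) satisfies `rely`. -/
def Assume (pre : Set St) (rely : Set (St × St)) :
    Set (List (EventSys Lbl Prog St × St)) :=
  {cl | (∀ c ∈ cl.head?, c.2 ∈ pre) ∧
    ∀ i : ℕ, (h : i + 1 < cl.length) →
      (cl.get ⟨i, Nat.lt_of_succ_lt h⟩).1 = (cl.get ⟨i + 1, h⟩).1 →
      ((cl.get ⟨i, Nat.lt_of_succ_lt h⟩).2, (cl.get ⟨i + 1, h⟩).2) ∈ rely}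

/-- The commitment function: every component step (consecutive configurations
related by a labelled event-system transition) satisfies `guar`, and the final
state is in `post` whenever the final event system is the terminated event ⟨⊥⟩. -/
def Commit (guar : Set (St × St)) (post : Set St) :
    Set (List (EventSys Lbl Prog St × St)) :=
  {cl | (∀ i : ℕ, (h : i + 1 < cl.length) →
      (∃ δ : TranKind Lbl × K,
        esStep K ptran bot Γ (cl.get ⟨i, Nat.lt_of_succ_lt h⟩) δ (cl.get ⟨i + 1, h⟩)) →
      ((cl.get ⟨i, Nat.lt_of_succ_lt h⟩).2, (cl.get ⟨i + 1, h⟩).2) ∈ guar) ∧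
    (∀ c ∈ cl.getLast?, c.1 = EventSys.trig bot → c.2 ∈ post)}

/-- Computations of an event system `S` starting from the initial state `s`. -/
def cptsFrom (S : EventSys Lbl Prog St) (s : St) :
    Set (List (EventSys Lbl Prog St × St)) :=
  {cl | cpts K ptran bot Γ cl ∧ cl.head? = some (S, s)}

/-- Validity of a rely-guarantee specification for an event system:
`Σ ⊨ ES sat [pre, rely, guar, post]`. -/
def esValid (S : EventSys Lbl Prog St)
    (pre : Set St) (rely guar : Set (St × St)) (post : Set St) : Prop :=
  ∀ s : St, cptsFrom K ptran bot Γ S s ∩ Assume pre rely ⊆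
    Commit K ptran bot Γ guar post

/-- Program computations. -/
inductive pcpts : List (Prog × St) → Prop where
  | one {P s} : pcpts [(P, s)]
  | env {P s t cs} (h : pcpts ((P, t) :: cs)) : pcpts ((P, s) :: (P, t) :: cs)
  | step {P Q s t cs} (h : ptran Γ (P, s) (Q, t))
      (h2 : pcpts ((Q, t) :: cs)) : pcpts ((P, s) :: (Q, t) :: cs)

/-- The assumption function at the program level. -/
def pAssume (pre : Set St) (rely : Set (St × St)) : Set (List (Prog × St)) :=
  {cl | (∀ c ∈ cl.head?, c.2 ∈ pre) ∧
    ∀ i : ℕ, (h : i + 1 < cl.length) →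
      (cl.get ⟨i, Nat.lt_of_succ_lt h⟩).1 = (cl.get ⟨i + 1, h⟩).1 →
      ((cl.get ⟨i, Nat.lt_of_succ_lt h⟩).2, (cl.get ⟨i + 1, h⟩).2) ∈ rely}

/-- The commitment function at the program level, with termination at ⊥. -/
def pCommit (guar : Set (St × St)) (post : Set St) : Set (List (Prog × St)) :=
  {cl | (∀ i : ℕ, (h : i + 1 < cl.length) →
      ptran Γ (cl.get ⟨i, Nat.lt_of_succ_lt h⟩) (cl.get ⟨i + 1, h⟩) →
      ((cl.get ⟨i, Nat.lt_of_succ_lt h⟩).2, (cl.get ⟨i + 1, h⟩).2) ∈ guar) ∧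
    (∀ c ∈ cl.getLast?, c.1 = bot → c.2 ∈ post)}

/-- Program-level validity: `Σ ⊨p P sat [pre, rely, guar, post]`. -/
def pValid (P : Prog) (pre : Set St) (rely guar : Set (St × St)) (post : Set St) :
    Prop :=
  ∀ s : St,
    {cl : List (Prog × St) | pcpts ptran Γ cl ∧ cl.head? = some (P, s)} ∩
      pAssume pre rely ⊆ pCommit ptran bot Γ guar post

end RG

/-- `stable f g`: the set `f` is stable under the relation `g`. -/
def stable {St : Type} (f : Set St) (g : Set (St × St)) : Prop :=
  ∀ x y : St, x ∈ f → (x, y) ∈ g → y ∈ f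

/-- The identity relation on states. -/
def IdRel (St : Type) : Set (St × St) := {p | p.1 = p.2}



section Hoare
variable {Lbl Prog St Env : Type}
variable (prules : Env → Prog → Set St → Set (St × St) → Set (St × St) → Set St → Prop)

/-- The PiCore rely-guarantee proof system for event systems,
relative to a program-level proof system `prules`. -/
inductive rghoare (Γ : Env) :
    EventSys Lbl Prog St → Set St → Set (St × St) → Set (St × St) → Set St → Prop where
  | basicEvt {ev : Set (Lbl × Set St × Prog)} {pre rely guar post}
      (h : ∀ l g P, (l, g, P) ∈ ev → prules Γ P (pre ∩ g) rely guar post)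
      (hst : stable pre rely) (hid : IdRel St ⊆ guar) :
      rghoare Γ (.basic ev) pre rely guar post
  | atomEvt {ev : Set (Lbl × Set St × Prog)} {pre rely guar post}
      (h : ∀ l g P, (l, g, P) ∈ ev → ∀ V : St,
        prules Γ P (pre ∩ g ∩ {V}) (IdRel St) Set.univ ({s | (V, s) ∈ guar} ∩ post))
      (h1 : stable pre rely) (h2 : stable post rely) :
      rghoare Γ (.atom ev) pre rely guar post
  | trigEvt {P pre rely guar post}
      (h : prules Γ P pre rely guar post) :
      rghoare Γ (.trig P) pre rely guar post
  | seq {S1 S2 pre mid rely guar post}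
      (h1 : rghoare Γ S1 pre rely guar mid)
      (h2 : rghoare Γ S2 mid rely guar post) :
      rghoare Γ (.seq S1 S2) pre rely guar post
  | choice {S1 S2 pre rely guar post}
      (h1 : rghoare Γ S1 pre rely guar post)
      (h2 : rghoare Γ S2 pre rely guar post) :
      rghoare Γ (.choice S1 S2) pre rely guar post
  | join {S1 S2 pre1 pre2 rely rely1 rely2 guar guar1 guar2 post1 post2}
      (h1 : rghoare Γ S1 pre1 rely1 guar1 post1)
      (h2 : rghoare Γ S2 pre2 rely2 guar2 post2)
      (h3 : guar1 ∪ guar2 ⊆ guar)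
      (h4 : rely ∪ guar2 ⊆ rely1)
      (h5 : rely ∪ guar1 ⊆ rely2)
      (h6 : IdRel St ⊆ guar) :
      rghoare Γ (.join S1 S2) (pre1 ∩ pre2) rely guar (post1 ∩ post2)
  | iter {b S inv rely guar post}
      (h1 : rghoare Γ S (inv ∩ b) rely guar inv)
      (h2 : inv ∩ bᶜ ⊆ post)
      (h3 : IdRel St ⊆ guar)
      (h4 : stable inv rely)
      (h5 : stable post rely) :
      rghoare Γ (.iter b S) inv rely guar post
  | conseq {S pre pre' rely rely' guar guar' post post'}
      (h : rghoare Γ S pre' rely' guar' post')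
      (h1 : pre ⊆ pre') (h2 : rely ⊆ rely')
      (h3 : guar' ⊆ guar) (h4 : post' ⊆ post) :
      rghoare Γ S pre rely guar post

end Hoare

end PiCore

namespace PiCore
section Soundness

variable {Lbl Prog St Env : Type} {K : Type}
variable {ptran : Env → Prog × St → Prog × St → Prop} {bot : Prog} {Γ : Env}

/-- Step-indexed safety predicate for event systems. -/
def safe (K : Type) (ptran : Env → Prog × St → Prog × St → Prop) (bot : Prog)
    (Γ : Env) (rely guar : Set (St × St)) (post : Set St) :
    ℕ → EventSys Lbl Prog St → St → Prop
  | 0, _, _ => True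
  | n+1, ES, s =>
      (ES = .trig bot → s ∈ post) ∧
      (∀ t, (s, t) ∈ rely → safe K ptran bot Γ rely guar post n ES t) ∧
      (∀ (δ : TranKind Lbl × K) ES' t, esStep K ptran bot Γ (ES, s) δ (ES', t) →
        (s, t) ∈ guar ∧ safe K ptran bot Γ rely guar post n ES' t)

theorem safe_succ {rely guar post} :
    ∀ n (ES : EventSys Lbl Prog St) s,
      safe K ptran bot Γ rely guar post (n+1) ES s →
      safe K ptran bot Γ rely guar post n ES s := by
  intro n
  induction n with
  | zero => intro ES s _; trivial
  | succ m ih =>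
    intro ES s h
    refine ⟨h.1, fun t ht => ih _ _ (h.2.1 t ht), fun δ ES' t hs => ?_⟩
    exact ⟨(h.2.2 δ ES' t hs).1, ih _ _ (h.2.2 δ ES' t hs).2⟩

theorem safe_mono {rely rely' guar guar' : Set (St × St)} {post post' : Set St}
    (hr : rely ⊆ rely') (hg : guar' ⊆ guar) (hp : post' ⊆ post) :
    ∀ n (ES : EventSys Lbl Prog St) s,
      safe K ptran bot Γ rely' guar' post' n ES s →
      safe K ptran bot Γ rely guar post n ES s := by
  intro n
  induction n with
  | zero => intro ES s _; trivial
  | succ m ih =>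
    intro ES s h
    refine ⟨fun he => hp (h.1 he), fun t ht => ih _ _ (h.2.1 t (hr ht)),
      fun δ ES' t hs => ⟨hg (h.2.2 δ ES' t hs).1, ih _ _ (h.2.2 δ ES' t hs).2⟩⟩

/-- Results of event-system steps are headed by trig, seq or join. -/
theorem esStep_shape {c c' : EventSys Lbl Prog St × St} {δ : TranKind Lbl × K}
    (h : esStep K ptran bot Γ c δ c') :
    (∃ P, c'.1 = .trig P) ∨ (∃ a b, c'.1 = .seq a b) ∨ (∃ a b, c'.1 = .join a b) ∨
      sizeOf c'.1 < sizeOf c.1 := by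
  induction h with
  | basicEvt h1 h2 => exact Or.inl ⟨_, rfl⟩
  | atomEvt h1 h2 h3 => exact Or.inl ⟨_, rfl⟩
  | trigEvt h => exact Or.inl ⟨_, rfl⟩
  | seqStep h hne ih => exact Or.inr (Or.inl ⟨_, _, rfl⟩)
  | @seqFin S1 S2 s t δ h ih =>
    refine Or.inr (Or.inr (Or.inr ?_))
    simp only
    have := EventSys.seq.sizeOf_spec (Lbl := Lbl) (Prog := Prog) (St := St) S1 S2
    omega
  | @choice1 S1 S2 S1' s t δ h ih =>
    rcases ih with h' | h' | h' | h'
    · exact Or.inl h'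
    · exact Or.inr (Or.inl h')
    · exact Or.inr (Or.inr (Or.inl h'))
    · refine Or.inr (Or.inr (Or.inr ?_))
      simp only at h' ⊢
      have := EventSys.choice.sizeOf_spec (Lbl := Lbl) (Prog := Prog) (St := St) S1 S2
      omega
  | @choice2 S1 S2 S2' s t δ h ih =>
    rcases ih with h' | h' | h' | h'
    · exact Or.inl h'
    · exact Or.inr (Or.inl h')
    · exact Or.inr (Or.inr (Or.inl h'))
    · refine Or.inr (Or.inr (Or.inr ?_))
      simp only at h' ⊢
      have := EventSys.choice.sizeOf_spec (Lbl := Lbl) (Prog := Prog) (St := St) S1 S2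
      omega
  | join1 h ih => exact Or.inr (Or.inr (Or.inl ⟨_, _, rfl⟩))
  | join2 h ih => exact Or.inr (Or.inr (Or.inl ⟨_, _, rfl⟩))
  | joinFin => exact Or.inl ⟨_, rfl⟩
  | iterT h hne => exact Or.inr (Or.inl ⟨_, _, rfl⟩)
  | iterF h => exact Or.inl ⟨_, rfl⟩

/-- Event-system steps always change the event system. -/
theorem esStep_ne (hneq : ∀ (Γ : Env) (P : Prog) (s t : St), ¬ ptran Γ (P, s) (P, t))
    {c c' : EventSys Lbl Prog St × St} {δ : TranKind Lbl × K}
    (h : esStep K ptran bot Γ c δ c') : c.1 ≠ c'.1 := by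
  induction h with
  | basicEvt h1 h2 => simp
  | atomEvt h1 h2 h3 => simp
  | trigEvt h =>
    simp only [ne_eq, EventSys.trig.injEq]
    rintro rfl; exact hneq _ _ _ _ h
  | seqStep h hne ih => simp only [ne_eq, EventSys.seq.injEq]; rintro ⟨rfl, -⟩; exact ih rfl
  | @seqFin S1 S2 s t δ h ih =>
    intro he
    have h2 := congrArg (fun x : EventSys Lbl Prog St => sizeOf x) he
    simp only at h2
    have := EventSys.seq.sizeOf_spec (Lbl := Lbl) (Prog := Prog) (St := St) S1 S2
    omega
  | @choice1 S1 S2 S1' s t δ h ih =>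
    intro he
    rcases esStep_shape h with ⟨P, hP⟩ | ⟨a, b, hP⟩ | ⟨a, b, hP⟩ | hP
    · simp only at hP; rw [hP] at he; simp at he
    · simp only at hP; rw [hP] at he; simp at he
    · simp only at hP; rw [hP] at he; simp at he
    · simp only at hP he
      rw [← he] at hP
      have := EventSys.choice.sizeOf_spec (Lbl := Lbl) (Prog := Prog) (St := St) S1 S2
      omega
  | @choice2 S1 S2 S2' s t δ h ih =>
    intro he
    rcases esStep_shape h with ⟨P, hP⟩ | ⟨a, b, hP⟩ | ⟨a, b, hP⟩ | hP
    · simp only at hP; rw [hP] at he; simp at he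
    · simp only at hP; rw [hP] at he; simp at he
    · simp only at hP; rw [hP] at he; simp at he
    · simp only at hP he
      rw [← he] at hP
      have := EventSys.choice.sizeOf_spec (Lbl := Lbl) (Prog := Prog) (St := St) S1 S2
      omega
  | join1 h ih => simp only [ne_eq, EventSys.join.injEq]; rintro ⟨rfl, -⟩; exact ih rfl
  | join2 h ih => simp only [ne_eq, EventSys.join.injEq]; rintro ⟨-, rfl⟩; exact ih rfl
  | joinFin => simp
  | iterT h hne => simp
  | iterF h => simp

/-- Semantic judgment for programs: every computation from `(P, s)` whose
environment steps satisfy `rely` satisfies the commitment. -/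
def pOK (ptran : Env → Prog × St → Prog × St → Prop) (bot : Prog) (Γ : Env)
    (rely guar : Set (St × St)) (post : Set St) (P : Prog) (s : St) : Prop :=
  ∀ cl, pcpts ptran Γ ((P, s) :: cl) →
    ((P, s) :: cl) ∈ pAssume (St := St) (Prog := Prog) Set.univ rely →
    ((P, s) :: cl) ∈ pCommit ptran bot Γ guar post

theorem pOK_of_pValid {pre rely guar post} {P : Prog} {s : St}
    (h : pValid ptran bot Γ P pre rely guar post) (hs : s ∈ pre) :
    pOK ptran bot Γ rely guar post P s := by
  intro cl hc ha
  exact h s ⟨⟨hc, rfl⟩, ⟨by simp [hs], ha.2⟩⟩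

theorem pOK_bot {rely guar post} {s : St}
    (h : pOK ptran bot Γ rely guar post bot s) :
    s ∈ post := by
  have h2 := h [] pcpts.one ⟨by simp, by intro i hi; simp at hi⟩
  exact h2.2 (bot, s) (by simp) rfl

theorem pOK_rely {rely guar post} {P : Prog} {s t : St}
    (hr : (s, t) ∈ rely)
    (h : pOK ptran bot Γ rely guar post P s) :
    pOK ptran bot Γ rely guar post P t := by
  intro cl hc ha
  have hc' : pcpts ptran Γ ((P, s) :: (P, t) :: cl) := pcpts.env hc
  have ha' : ((P, s) :: (P, t) :: cl) ∈ pAssume (St := St) Set.univ rely := by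
    refine ⟨by simp, fun i hi he => ?_⟩
    match i with
    | 0 => exact hr
    | (i+1) => exact ha.2 i (by simpa using hi) he
  have hcm := h _ hc' ha'
  refine ⟨fun i hi hp => hcm.1 (i+1) (by simpa using hi) hp, ?_⟩
  intro c hc2 hb
  exact hcm.2 c (by simpa using hc2) hb

theorem pOK_step (hneq : ∀ (Γ : Env) (P : Prog) (s t : St), ¬ ptran Γ (P, s) (P, t))
    {rely guar post} {P Q : Prog} {s t : St}
    (hp : ptran Γ (P, s) (Q, t))
    (h : pOK ptran bot Γ rely guar post P s) :
    (s, t) ∈ guar ∧ pOK ptran bot Γ rely guar post Q t := by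
  have hPQ : P ≠ Q := by rintro rfl; exact hneq Γ P s t hp
  constructor
  · have hc : pcpts ptran Γ [(P, s), (Q, t)] := pcpts.step hp pcpts.one
    have ha : [(P, s), (Q, t)] ∈ pAssume (St := St) Set.univ rely := by
      refine ⟨by simp, fun i hi he => ?_⟩
      match i with
      | 0 => simp at he; exact absurd he hPQ
      | (i+1) => simp at hi
    have h2 := (h [(Q, t)] hc ha).1 0 (by simp)
    simpa using h2 hp
  · intro cl hc ha
    have hc' : pcpts ptran Γ ((P, s) :: (Q, t) :: cl) := pcpts.step hp hc
    have ha' : ((P, s) :: (Q, t) :: cl) ∈ pAssume (St := St) Set.univ rely := by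
      refine ⟨by simp, fun i hi he => ?_⟩
      match i with
      | 0 => simp at he; exact absurd he hPQ
      | (i+1) => exact ha.2 i (by simpa using hi) he
    have hcm := h _ hc' ha'
    refine ⟨fun i hi hp2 => hcm.1 (i+1) (by simpa using hi) hp2, ?_⟩
    intro c hc2 hb
    exact hcm.2 c (by simpa using hc2) hb

theorem safe_trig (hneq : ∀ (Γ : Env) (P : Prog) (s t : St), ¬ ptran Γ (P, s) (P, t))
    {rely guar post} :
    ∀ n (P : Prog) (s : St),
      pOK ptran bot Γ rely guar post P s →
      safe (Lbl := Lbl) K ptran bot Γ rely guar post n (.trig P) s := by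
  intro n
  induction n with
  | zero => intro P s _; trivial
  | succ m ih =>
    intro P s h
    refine ⟨fun he => ?_, fun t ht => ih _ _ (pOK_rely ht h), fun δ ES' t hs => ?_⟩
    · cases he; exact pOK_bot h
    · cases hs with
      | trigEvt hp =>
        obtain ⟨hg, h2⟩ := pOK_step hneq hp h
        exact ⟨hg, ih _ _ h2⟩

theorem safe_bot_stable (hbot : ∀ (Γ : Env) (s : St) (c : Prog × St), ¬ ptran Γ (bot, s) c)
    {rely guar : Set (St × St)} {post : Set St} (hst : stable post rely) :
    ∀ n (s : St), s ∈ post →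
      safe (Lbl := Lbl) K ptran bot Γ rely guar post n (.trig bot) s := by
  intro n
  induction n with
  | zero => intro s _; trivial
  | succ m ih =>
    intro s hs
    refine ⟨fun _ => hs, fun t ht => ih t (hst s t hs ht), fun δ ES' t hstep => ?_⟩
    cases hstep with
    | trigEvt hp => exact absurd hp (hbot Γ s _)

theorem safe_bot_pair (hbot : ∀ (Γ : Env) (s : St) (c : Prog × St), ¬ ptran Γ (bot, s) c)
    {rely rely1 rely2 guar guar1 guar2 : Set (St × St)} {post1 post2 : Set St}
    (hr1 : rely ⊆ rely1) (hr2 : rely ⊆ rely2) :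
    ∀ n (s : St),
      safe (Lbl := Lbl) K ptran bot Γ rely1 guar1 post1 n (.trig bot) s →
      safe (Lbl := Lbl) K ptran bot Γ rely2 guar2 post2 n (.trig bot) s →
      safe (Lbl := Lbl) K ptran bot Γ rely guar (post1 ∩ post2) n (.trig bot) s := by
  intro n
  induction n with
  | zero => intro s _ _; trivial
  | succ m ih =>
    intro s h1 h2
    refine ⟨fun _ => ⟨h1.1 rfl, h2.1 rfl⟩,
      fun t ht => ih t (h1.2.1 t (hr1 ht)) (h2.2.1 t (hr2 ht)),
      fun δ ES' t hstep => ?_⟩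
    cases hstep with
    | trigEvt hp => exact absurd hp (hbot Γ s _)

theorem safe_seq
    {rely guar : Set (St × St)} {mid post : Set St} {S2 : EventSys Lbl Prog St} :
    ∀ n (S1 : EventSys Lbl Prog St) (s : St),
      safe K ptran bot Γ rely guar mid n S1 s →
      (∀ t ∈ mid, safe K ptran bot Γ rely guar post n S2 t) →
      safe K ptran bot Γ rely guar post n (.seq S1 S2) s := by
  intro n
  induction n with
  | zero => intro S1 s _ _; trivial
  | succ m ih =>
    intro S1 s h1 h2
    refine ⟨fun he => (nomatch he), fun t ht => ?_, fun δ ES' t hstep => ?_⟩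
    · exact ih _ _ (h1.2.1 t ht) (fun u hu => safe_succ _ _ _ (h2 u hu))
    · cases hstep with
      | seqStep hs hne =>
        obtain ⟨hg, hsafe⟩ := h1.2.2 _ _ _ hs
        exact ⟨hg, ih _ _ hsafe (fun u hu => safe_succ _ _ _ (h2 u hu))⟩
      | seqFin hs =>
        obtain ⟨hg, hsafe⟩ := h1.2.2 _ _ _ hs
        refine ⟨hg, ?_⟩
        match m with
        | 0 => trivial
        | (m'+1) => exact safe_succ _ _ _ (h2 t (hsafe.1 rfl))

theorem safe_choice
    {rely guar : Set (St × St)} {post : Set St} :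
    ∀ n (S1 S2 : EventSys Lbl Prog St) (s : St),
      safe K ptran bot Γ rely guar post n S1 s →
      safe K ptran bot Γ rely guar post n S2 s →
      safe K ptran bot Γ rely guar post n (.choice S1 S2) s := by
  intro n
  induction n with
  | zero => intro S1 S2 s _ _; trivial
  | succ m ih =>
    intro S1 S2 s h1 h2
    refine ⟨fun he => (nomatch he),
      fun t ht => ih _ _ _ (h1.2.1 t ht) (h2.2.1 t ht), fun δ ES' t hstep => ?_⟩
    cases hstep with
    | choice1 hs => exact h1.2.2 _ _ _ hs
    | choice2 hs => exact h2.2.2 _ _ _ hs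

theorem safe_join (hbot : ∀ (Γ : Env) (s : St) (c : Prog × St), ¬ ptran Γ (bot, s) c)
    {rely rely1 rely2 guar guar1 guar2 : Set (St × St)} {post1 post2 : Set St}
    (h3 : guar1 ∪ guar2 ⊆ guar) (h4 : rely ∪ guar2 ⊆ rely1)
    (h5 : rely ∪ guar1 ⊆ rely2) (h6 : IdRel St ⊆ guar) :
    ∀ n (S1 S2 : EventSys Lbl Prog St) (s : St),
      safe K ptran bot Γ rely1 guar1 post1 n S1 s →
      safe K ptran bot Γ rely2 guar2 post2 n S2 s →
      safe K ptran bot Γ rely guar (post1 ∩ post2) n (.join S1 S2) s := by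
  intro n
  induction n with
  | zero => intro S1 S2 s _ _; trivial
  | succ m ih =>
    intro S1 S2 s h1 h2
    refine ⟨fun he => (nomatch he), fun t ht => ?_, fun δ ES' t hstep => ?_⟩
    · exact ih _ _ _ (h1.2.1 t (h4 (Or.inl ht))) (h2.2.1 t (h5 (Or.inl ht)))
    · cases hstep with
      | join1 hs =>
        obtain ⟨hg, hsafe⟩ := h1.2.2 _ _ _ hs
        exact ⟨h3 (Or.inl hg), ih _ _ _ hsafe (h2.2.1 t (h5 (Or.inr hg)))⟩
      | join2 hs =>
        obtain ⟨hg, hsafe⟩ := h2.2.2 _ _ _ hs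
        exact ⟨h3 (Or.inr hg), ih _ _ _ (h1.2.1 t (h4 (Or.inr hg))) hsafe⟩
      | joinFin =>
        refine ⟨h6 rfl, ?_⟩
        exact safe_bot_pair hbot (fun p hp => h4 (Or.inl hp)) (fun p hp => h5 (Or.inl hp))
          m s (safe_succ _ _ _ h1) (safe_succ _ _ _ h2)

theorem safe_iter (hbot : ∀ (Γ : Env) (s : St) (c : Prog × St), ¬ ptran Γ (bot, s) c)
    {rely guar : Set (St × St)} {b inv post : Set St} {S : EventSys Lbl Prog St}
    (hS : ∀ s ∈ inv ∩ b, ∀ n, safe K ptran bot Γ rely guar inv n S s)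
    (h2 : inv ∩ bᶜ ⊆ post) (h3 : IdRel St ⊆ guar)
    (h4 : stable inv rely) (h5 : stable post rely) :
    ∀ n (s : St), s ∈ inv → safe K ptran bot Γ rely guar post n (.iter b S) s := by
  intro n
  induction n with
  | zero => intro s _; trivial
  | succ m ih =>
    intro s hs
    refine ⟨fun he => (nomatch he), fun t ht => ih t (h4 s t hs ht),
      fun δ ES' t hstep => ?_⟩
    cases hstep with
    | iterT hb hne =>
      refine ⟨h3 rfl, ?_⟩
      exact safe_seq m S s (hS s ⟨hs, hb⟩ m) (fun u hu => ih u hu)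
    | iterF hb =>
      exact ⟨h3 rfl, safe_bot_stable hbot h5 m s (h2 ⟨hs, hb⟩)⟩

/-- Derivability implies step-indexed safety. -/
theorem rghoare_safe (K : Type)
    {prules : Env → Prog → Set St → Set (St × St) → Set (St × St) → Set St → Prop}
    (hbot : ∀ (Γ : Env) (s : St) (c : Prog × St), ¬ ptran Γ (bot, s) c)
    (hneq : ∀ (Γ : Env) (P : Prog) (s t : St), ¬ ptran Γ (P, s) (P, t))
    (psound : ∀ (Γ : Env) (P : Prog) pre rely guar post,
      prules Γ P pre rely guar post → pValid ptran bot Γ P pre rely guar post)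
    {ES : EventSys Lbl Prog St} {pre : Set St} {rely guar : Set (St × St)} {post : Set St}
    (h : rghoare prules Γ ES pre rely guar post) :
    ∀ s ∈ pre, ∀ n, safe K ptran bot Γ rely guar post n ES s := by
  induction h with
  | @basicEvt ev pre rely guar post h hst hid =>
    intro s hs n
    induction n generalizing s with
    | zero => trivial
    | succ m ih =>
      refine ⟨fun he => (nomatch he), fun t ht => ih t (hst s t hs ht),
        fun δ ES' t hstep => ?_⟩
      cases hstep with
      | basicEvt h1 h2 =>
        refine ⟨hid rfl, ?_⟩
        exact safe_trig hneq m _ _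
          (pOK_of_pValid (psound Γ _ _ _ _ _ (h _ _ _ h1)) ⟨hs, h2⟩)
  | @atomEvt ev pre rely guar post h h1 h2 =>
    intro s hs n
    induction n generalizing s with
    | zero => trivial
    | succ m ih =>
      refine ⟨fun he => (nomatch he), fun t ht => ih t (h1 s t hs ht),
        fun δ ES' t hstep => ?_⟩
      cases hstep with
      | @atomEvt _ l g P _ _ _ hev hg hrt =>
        have hv := psound Γ _ _ _ _ _ (h _ _ _ hev s)
        have hok : pOK ptran bot Γ (IdRel St) Set.univ
            ({x | (s, x) ∈ guar} ∩ post) P s :=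
          pOK_of_pValid hv ⟨⟨hs, hg⟩, rfl⟩
        have key : ∀ c, Relation.ReflTransGen (fun c c' => ptran Γ c c') (P, s) c →
            pOK ptran bot Γ (IdRel St) Set.univ
              ({x | (s, x) ∈ guar} ∩ post) c.1 c.2 := by
          intro c hc
          induction hc with
          | refl => exact hok
          | @tail b c hab hbc ihp =>
            obtain ⟨b1, b2⟩ := b
            obtain ⟨c1, c2⟩ := c
            exact (pOK_step hneq hbc ihp).2
        have hend := pOK_bot (key (bot, _) hrt)
        exact ⟨hend.1, safe_bot_stable hbot h2 m _ hend.2⟩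
  | @trigEvt P pre rely guar post hpr =>
    intro s hs n
    exact safe_trig hneq n P s (pOK_of_pValid (psound Γ _ _ _ _ _ hpr) hs)
  | @seq S1 S2 pre mid rely guar post hh1 hh2 ih1 ih2 =>
    intro s hs n
    exact safe_seq n S1 s (ih1 s hs n) (fun t ht => ih2 t ht n)
  | @choice S1 S2 pre rely guar post hh1 hh2 ih1 ih2 =>
    intro s hs n
    exact safe_choice n S1 S2 s (ih1 s hs n) (ih2 s hs n)
  | @join S1 S2 pre1 pre2 rely rely1 rely2 guar guar1 guar2 post1 post2
      hh1 hh2 hg3 hg4 hg5 hg6 ih1 ih2 =>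
    intro s hs n
    exact safe_join hbot hg3 hg4 hg5 hg6 n S1 S2 s (ih1 s hs.1 n) (ih2 s hs.2 n)
  | @iter b S inv rely guar post hh1 hi2 hi3 hi4 hi5 ih =>
    intro s hs n
    exact safe_iter hbot (fun u hu n' => ih u hu n') hi2 hi3 hi4 hi5 n s hs
  | @conseq S pre pre' rely rely' guar guar' post post' hh hc1 hc2 hc3 hc4 ih =>
    intro s hs n
    exact safe_mono hc2 hc3 hc4 n S s (ih s (hc1 hs) n)

/-- Step-indexed safety implies the commitment on every computation. -/
theorem safe_sound
    (hneq : ∀ (Γ : Env) (P : Prog) (s t : St), ¬ ptran Γ (P, s) (P, t))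
    {rely guar : Set (St × St)} {post : Set St} :
    ∀ {cl : List (EventSys Lbl Prog St × St)}, cpts K ptran bot Γ cl →
      ∀ S s, cl.head? = some (S, s) →
      (∀ n, safe K ptran bot Γ rely guar post n S s) →
      cl ∈ Assume (Lbl := Lbl) (Prog := Prog) Set.univ rely →
      cl ∈ Commit K ptran bot Γ guar post := by
  intro cl hc
  induction hc with
  | @one S0 s0 =>
    intro S s hh hsafe ha
    simp only [List.head?_cons, Option.some.injEq, Prod.mk.injEq] at hh
    obtain ⟨rfl, rfl⟩ := hh
    refine ⟨fun i hi => by simp at hi, ?_⟩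
    intro c hc2 hb
    simp only [List.getLast?_singleton, Option.mem_def, Option.some.injEq] at hc2
    subst hc2
    exact (hsafe 1).1 hb
  | @env S0 s0 t0 cs hc ih =>
    intro S s hh hsafe ha
    simp only [List.head?_cons, Option.some.injEq, Prod.mk.injEq] at hh
    obtain ⟨hS, hs⟩ := hh
    subst hS; subst hs
    have hrely : (s0, t0) ∈ rely := by
      have := ha.2 0 (by simp)
      simpa using this
    have hsafe' : ∀ n, safe K ptran bot Γ rely guar post n S0 t0 :=
      fun n => (hsafe (n+1)).2.1 t0 hrely
    have ha' : ((S0, t0) :: cs) ∈ Assume (Lbl := Lbl) (Prog := Prog) Set.univ rely := by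
      refine ⟨by simp, fun i hi he => ?_⟩
      exact ha.2 (i+1) (by simpa using hi) he
    have ihc := ih S0 t0 rfl hsafe' ha'
    refine ⟨fun i hi => ?_, ?_⟩
    · match i with
      | 0 =>
        rintro ⟨δ2, hstep⟩
        simp only [List.get_eq_getElem, List.getElem_cons_zero,
          List.getElem_cons_succ] at hstep
        exact (esStep_ne hneq hstep rfl).elim
      | (i+1) =>
        intro hst
        exact ihc.1 i (by simpa using hi) hst
    · intro c hc2 hb
      exact ihc.2 c (by simpa using hc2) hb
  | @act S1 S2 s0 t0 cs δ hstep hc ih =>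
    intro S s hh hsafe ha
    simp only [List.head?_cons, Option.some.injEq, Prod.mk.injEq] at hh
    obtain ⟨hS, hs⟩ := hh
    subst hS; subst hs
    obtain ⟨hg, hsafe1⟩ := (hsafe 1).2.2 δ S2 t0 hstep
    have hsafe' : ∀ n, safe K ptran bot Γ rely guar post n S2 t0 :=
      fun n => ((hsafe (n+1)).2.2 δ S2 t0 hstep).2
    have ha' : ((S2, t0) :: cs) ∈ Assume (Lbl := Lbl) (Prog := Prog) Set.univ rely := by
      refine ⟨by simp, fun i hi he => ?_⟩
      exact ha.2 (i+1) (by simpa using hi) he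
    have ihc := ih S2 t0 rfl hsafe' ha'
    refine ⟨fun i hi => ?_, ?_⟩
    · match i with
      | 0 => intro _; simpa using hg
      | (i+1) =>
        intro hst
        exact ihc.1 i (by simpa using hi) hst
    · intro c hc2 hb
      exact ihc.2 c (by simpa using hc2) hb

end Soundness
end PiCore


open PiCore in
/-- **Soundness of the PiCore proof system for event systems:**
derivability implies validity, provided the program-level proof system is sound. -/
theorem picore_proof_system_sound
    {Lbl Prog St Env : Type} (K : Type)
    (ptran : Env → Prog × St → Prog × St → Prop) (bot : Prog)
    (prules : Env → Prog → Set St → Set (St × St) → Set (St × St) → Set St → Prop)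
    (hbot : ∀ (Γ : Env) (s : St) (c : Prog × St), ¬ ptran Γ (bot, s) c)
    (hneq : ∀ (Γ : Env) (P : Prog) (s t : St), ¬ ptran Γ (P, s) (P, t))
    (psound : ∀ (Γ : Env) (P : Prog) pre rely guar post,
      prules Γ P pre rely guar post → pValid ptran bot Γ P pre rely guar post) :
    ∀ (Γ : Env) (ES : EventSys Lbl Prog St)
      (pre : Set St) (rely guar : Set (St × St)) (post : Set St),
      rghoare prules Γ ES pre rely guar post →
      esValid K ptran bot Γ ES pre rely guar post := by
  intro Γ ES pre rely guar post h s cl hcl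
  obtain ⟨⟨hc, hh⟩, ha⟩ := hcl
  have hs : s ∈ pre := ha.1 (ES, s) hh
  exact safe_sound hneq hc ES s hh
    (rghoare_safe K hbot hneq psound h s hs)
    ⟨fun c _ => trivial, ha.2⟩
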